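/- Suppose G is bounded below with infimum G*, the constant step size satisfies 0 < α < 2/(L·σ²), and set κ = (α/n)·(1 − L·α·σ²/2) > 0. Then for every sequence of batches B_0, B_1, …, iterates θ_{t+1} = U(θ_t, B_t, α), and every horizon T ≥ 1, there exists a time step τ with 0 ≤ τ ≤ T−1 such that T(θ_τ, B_τ) ≤ (G(θ_0) − G*) / (κ·T). -/

import Mathlib

open scoped RealInnerProductSpace BigOperators

/-- Descent lemma: a differentiable function with `L`-Lipschitz gradient satisfies
`G y ≤ G x + ⟪∇G x, y - x⟫ + L/2 ‖y - x‖²`. -/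
lemma descent_lemma {E : Type*} [NormedAddCommGroup E] [InnerProductSpace ℝ E] [CompleteSpace E]
    {G : E → ℝ} (hG : Differentiable ℝ G) {L : ℝ} (hL : 0 ≤ L)
    (hGL : ∀ x y, ‖gradient G x - gradient G y‖ ≤ L * ‖x - y‖) (x y : E) :
    G y ≤ G x + ⟪gradient G x, y - x⟫ + L / 2 * ‖y - x‖ ^ 2 := by
  set v := y - x with hv
  have hcurve : ∀ t : ℝ, HasDerivAt (fun t : ℝ => x + t • v) v t := by
    intro t
    simpa using ((hasDerivAt_id t).smul_const v).const_add x
  have hh : ∀ t : ℝ, HasDerivAt (fun t : ℝ => G (x + t • v))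
      ⟪gradient G (x + t • v), v⟫ t := by
    intro t
    have h1 : HasGradientAt G (gradient G (x + t • v)) (x + t • v) :=
      (hG (x + t • v)).hasGradientAt
    have h2 := hasGradientAt_iff_hasFDerivAt.mp h1
    have h3 := h2.comp_hasDerivAt t (hcurve t)
    exact h3
  set ψ : ℝ → ℝ := fun t =>
    G (x + t • v) - t * ⟪gradient G x, v⟫ - L / 2 * ‖v‖ ^ 2 * t ^ 2 with hψ
  have hψd : ∀ t : ℝ, HasDerivAt ψ
      (⟪gradient G (x + t • v), v⟫ - ⟪gradient G x, v⟫ - L / 2 * ‖v‖ ^ 2 * (2 * t)) t := by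
    intro t
    have := ((hh t).sub (hasDerivAt_mul_const (⟪gradient G x, v⟫ : ℝ))).sub
      ((hasDerivAt_pow 2 t).const_mul (L / 2 * ‖v‖ ^ 2))
    rw [show ((2:ℕ):ℝ) * t ^ (2 - 1) = 2 * t by norm_num] at this
    exact this
  have hanti : AntitoneOn ψ (Set.Icc (0 : ℝ) 1) := by
    apply antitoneOn_of_deriv_nonpos (convex_Icc 0 1)
    · exact fun t _ => ((hψd t).differentiableAt).continuousAt.continuousWithinAt
    · exact fun t _ => ((hψd t).differentiableAt).differentiableWithinAt
    · intro t ht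
      rw [interior_Icc] at ht
      rw [(hψd t).deriv]
      have hts : (0:ℝ) ≤ t := ht.1.le
      have hinner : ⟪gradient G (x + t • v) - gradient G x, v⟫ ≤ L * t * ‖v‖ ^ 2 := by
        calc ⟪gradient G (x + t • v) - gradient G x, v⟫
            ≤ ‖gradient G (x + t • v) - gradient G x‖ * ‖v‖ := real_inner_le_norm _ _
          _ ≤ L * ‖x + t • v - x‖ * ‖v‖ := by
              have := hGL (x + t • v) x
              have hvnn : (0:ℝ) ≤ ‖v‖ := norm_nonneg _
              nlinarith [norm_nonneg (gradient G (x + t • v) - gradient G x)]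
          _ = L * t * ‖v‖ ^ 2 := by
              rw [add_sub_cancel_left, norm_smul, Real.norm_eq_abs, abs_of_nonneg hts]
              ring
      have hsub : ⟪gradient G (x + t • v) - gradient G x, v⟫
          = ⟪gradient G (x + t • v), v⟫ - ⟪gradient G x, v⟫ := by
        rw [inner_sub_left]
      nlinarith [hinner]
  have h01 := hanti (Set.left_mem_Icc.mpr zero_le_one) (Set.right_mem_Icc.mpr zero_le_one)
    zero_le_one
  have hψ0 : ψ 0 = G x := by simp [hψ]
  have hψ1 : ψ 1 = G y - ⟪gradient G x, v⟫ - L / 2 * ‖v‖ ^ 2 := by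
    have : x + v = y := by rw [hv]; abel
    simp [hψ, this]
  rw [hψ0, hψ1] at h01
  linarith

set_option maxHeartbeats 1000000 in
/-- STATEMENT 6: suppose `G` is bounded below with infimum `G*`, the constant step size
satisfies `0 < α < 2/(L·σ²)`, and set `κ = (α/n)·(1 − L·α·σ²/2) > 0`. Then for every
sequence of batches, iterates `θ (t+1) = U (θ t) (B t) α`, and every horizon `T ≥ 1`,
there exists a time step `τ` with `0 ≤ τ ≤ T−1` such that
`T(θ_τ, B_τ) ≤ (G(θ_0) − G*) / (κ·T)`. -/
theorem exists_step_small_T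
    (d N M n : ℕ) (hd : 0 < d) (hN : 0 < N) (hM : 0 < M) (hn : 0 < n) (hMN : M ≤ N)
    (σ L : ℝ) (hσ : 0 < σ) (hL : 0 < L)
    (f : Fin N → EuclideanSpace ℝ (Fin d) → ℝ)
    (hf : ∀ i, ContDiff ℝ 1 (f i))
    (hfb : ∀ i x, ‖gradient (f i) x‖ ≤ σ)
    (G : EuclideanSpace ℝ (Fin d) → ℝ)
    (hG : ∀ θ, G θ = (1 / (M : ℝ)) * ∑ i : Fin M, f (Fin.castLE hMN i) θ)
    (hGL : ∀ x y, ‖gradient G x - gradient G y‖ ≤ L * ‖x - y‖)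
    (U : EuclideanSpace ℝ (Fin d) → (Fin n → Fin N) → ℝ → EuclideanSpace ℝ (Fin d))
    (hU : ∀ θ B α, U θ B α = θ - (α / (n : ℝ)) • ∑ k : Fin n,
        max ⟪gradient G θ, gradient (f (B k)) θ⟫ 0 • gradient (f (B k)) θ)
    (T : EuclideanSpace ℝ (Fin d) → (Fin n → Fin N) → ℝ)
    (hT : ∀ θ B, T θ B = ∑ k : Fin n, (max ⟪gradient G θ, gradient (f (B k)) θ⟫ 0) ^ 2)
    (Gstar : ℝ) (hGstar : IsGLB (Set.range G) Gstar)
    (α : ℝ) (hα : 0 < α) (hα' : α < 2 / (L * σ ^ 2))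
    (κ : ℝ) (hκ : κ = (α / (n : ℝ)) * (1 - L * α * σ ^ 2 / 2)) (hκpos : 0 < κ)
    (B : ℕ → (Fin n → Fin N))
    (θ : ℕ → EuclideanSpace ℝ (Fin d))
    (hθ : ∀ t, θ (t + 1) = U (θ t) (B t) α)
    (Thor : ℕ) (hThor : 1 ≤ Thor) :
    ∃ τ < Thor, T (θ τ) (B τ) ≤ (G (θ 0) - Gstar) / (κ * (Thor : ℝ)) := by
  have hn' : ((n : ℝ)) ≠ 0 := Nat.cast_ne_zero.mpr hn.ne'
  have hfd : ∀ i, Differentiable ℝ (f i) := fun i => (hf i).differentiable one_ne_zero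
  have hGdiff : Differentiable ℝ G := by
    have : G = fun θ => (1 / (M : ℝ)) * ∑ i : Fin M, f (Fin.castLE hMN i) θ := funext hG
    rw [this]
    exact Differentiable.const_mul
      (Differentiable.fun_sum fun i _ => hfd (Fin.castLE hMN i)) _
  -- per-step descent
  have key : ∀ t, G (θ (t + 1)) ≤ G (θ t) - κ * T (θ t) (B t) := by
    intro t
    set x := θ t with hx
    set c : Fin n → ℝ := fun k => max ⟪gradient G x, gradient (f (B t k)) x⟫ 0 with hc
    set g : Fin n → EuclideanSpace ℝ (Fin d) := fun k => gradient (f (B t k)) x with hg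
    have hcnn : ∀ k, 0 ≤ c k := fun k => le_max_right _ _
    set w : EuclideanSpace ℝ (Fin d) := ∑ k : Fin n, c k • g k with hw
    have hstep : θ (t + 1) = x - (α / (n : ℝ)) • w := by
      rw [hθ t, hU]
    have hdiff : θ (t + 1) - x = -((α / (n : ℝ)) • w) := by
      rw [hstep]; abel
    have hdesc := descent_lemma hGdiff hL.le hGL x (θ (t + 1))
    -- inner product term
    have hinner : ⟪gradient G x, θ (t + 1) - x⟫
        = -((α / (n : ℝ)) * ∑ k : Fin n, c k ^ 2) := by
      rw [hdiff, inner_neg_right, real_inner_smul_right, hw, inner_sum]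
      congr 2
      refine Finset.sum_congr rfl fun k _ => ?_
      rw [real_inner_smul_right]
      rcases le_or_gt ⟪gradient G x, g k⟫ 0 with h | h
      · have : c k = 0 := max_eq_right h
        simp [this]
      · have : c k = ⟪gradient G x, g k⟫ := max_eq_left h.le
        rw [← this]; ring
    -- norm bound
    have hwnorm : ‖w‖ ≤ σ * ∑ k : Fin n, c k := by
      calc ‖w‖ ≤ ∑ k : Fin n, ‖c k • g k‖ := norm_sum_le _ _
        _ ≤ ∑ k : Fin n, c k * σ := by
            refine Finset.sum_le_sum fun k _ => ?_
            rw [norm_smul, Real.norm_eq_abs, abs_of_nonneg (hcnn k)]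
            exact mul_le_mul_of_nonneg_left (hfb _ _) (hcnn k)
        _ = σ * ∑ k : Fin n, c k := by rw [Finset.mul_sum]; exact Finset.sum_congr rfl (by intros; ring)
    have hsq : (∑ k : Fin n, c k) ^ 2 ≤ (n : ℝ) * ∑ k : Fin n, c k ^ 2 := by
      have := sq_sum_le_card_mul_sum_sq (s := (Finset.univ : Finset (Fin n))) (f := c)
      simpa using this
    have hnormsq : ‖θ (t + 1) - x‖ ^ 2
        ≤ (α / (n : ℝ)) ^ 2 * σ ^ 2 * ((n : ℝ) * ∑ k : Fin n, c k ^ 2) := by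
      have h1 : ‖θ (t + 1) - x‖ = (α / (n : ℝ)) * ‖w‖ := by
        rw [hdiff, norm_neg, norm_smul, Real.norm_eq_abs,
          abs_of_nonneg (by positivity : (0:ℝ) ≤ α / (n : ℝ))]
      have h2 : (0:ℝ) ≤ α / (n : ℝ) := by positivity
      have h3 : (0:ℝ) ≤ ‖w‖ := norm_nonneg _
      have h4 : (0:ℝ) ≤ σ * ∑ k : Fin n, c k := by positivity
      have h5 : ‖w‖ ^ 2 ≤ (σ * ∑ k : Fin n, c k) ^ 2 := by nlinarith
      calc ‖θ (t + 1) - x‖ ^ 2 = (α / (n : ℝ)) ^ 2 * ‖w‖ ^ 2 := by rw [h1]; ring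
        _ ≤ (α / (n : ℝ)) ^ 2 * (σ ^ 2 * (∑ k : Fin n, c k) ^ 2) := by
            refine mul_le_mul_of_nonneg_left ?_ (by positivity)
            nlinarith
        _ ≤ (α / (n : ℝ)) ^ 2 * (σ ^ 2 * ((n : ℝ) * ∑ k : Fin n, c k ^ 2)) :=
            mul_le_mul_of_nonneg_left (mul_le_mul_of_nonneg_left hsq (sq_nonneg σ)) (by positivity)
        _ = (α / (n : ℝ)) ^ 2 * σ ^ 2 * ((n : ℝ) * ∑ k : Fin n, c k ^ 2) := by ring
    have hTsum : T (θ t) (B t) = ∑ k : Fin n, c k ^ 2 := by rw [hT]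
    have hSnn : (0:ℝ) ≤ ∑ k : Fin n, c k ^ 2 := by positivity
    have halg : (α / (n : ℝ)) - L / 2 * ((α / (n : ℝ)) ^ 2 * σ ^ 2 * (n : ℝ)) = κ := by
      rw [hκ]; field_simp
    rw [hTsum]
    have hLhalf : L / 2 * ‖θ (t + 1) - x‖ ^ 2
        ≤ L / 2 * ((α / (n : ℝ)) ^ 2 * σ ^ 2 * ((n : ℝ) * ∑ k : Fin n, c k ^ 2)) :=
      mul_le_mul_of_nonneg_left hnormsq (by positivity)
    rw [hinner] at hdesc
    have hmul : L / 2 * ((α / (n : ℝ)) ^ 2 * σ ^ 2 * ((n : ℝ) * ∑ k : Fin n, c k ^ 2))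
        = ((α / (n : ℝ)) - κ) * ∑ k : Fin n, c k ^ 2 := by rw [← halg]; ring
    linarith [hdesc, hLhalf, hmul.le]
  -- telescoping
  have tele : ∀ m : ℕ, κ * ∑ t ∈ Finset.range m, T (θ t) (B t) ≤ G (θ 0) - G (θ m) := by
    intro m
    induction m with
    | zero => simp
    | succ m ih =>
      rw [Finset.sum_range_succ, mul_add]
      have := key m
      linarith
  have lb : Gstar ≤ G (θ Thor) := hGstar.1 ⟨θ Thor, rfl⟩
  have sum_le : κ * ∑ t ∈ Finset.range Thor, T (θ t) (B t) ≤ G (θ 0) - Gstar := by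
    have := tele Thor; linarith
  obtain ⟨τ, hτmem, hτmin⟩ := Finset.exists_min_image (Finset.range Thor)
    (fun t => T (θ t) (B t)) ⟨0, Finset.mem_range.mpr hThor⟩
  refine ⟨τ, Finset.mem_range.mp hτmem, ?_⟩
  have hThor' : (0:ℝ) < (Thor : ℝ) := by exact_mod_cast hThor
  have hcard : (Thor : ℝ) * T (θ τ) (B τ) ≤ ∑ t ∈ Finset.range Thor, T (θ t) (B t) := by
    calc (Thor : ℝ) * T (θ τ) (B τ)
        = ∑ _t ∈ Finset.range Thor, T (θ τ) (B τ) := by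
          rw [Finset.sum_const, Finset.card_range, nsmul_eq_mul]
      _ ≤ _ := Finset.sum_le_sum fun t ht => hτmin t ht
  rw [le_div_iff₀ (by positivity)]
  nlinarith [sum_le, hcard, hκpos]
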